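/- arXiv:2010.15083 — 6 statements merged into one kernel-verified Lean document; each statement's English description precedes it below -/
import Mathlib

section
/- Let n, k be positive natural numbers and define f(x) = x·log k + x − (x + 1/2)·log x − (x − 1)·log n for x > 0. Then f has a unique zero in the interval (0, ∞). -/
noncomputable def f (n k : ℕ) (x : ℝ) : ℝ :=
  x * Real.log k + x - (x + 1/2) * Real.log x - (x - 1) * Real.log n

/-- The derivative of `f` on positive reals. -/
noncomputable def fderiv' (n k : ℕ) (x : ℝ) : ℝ :=
  Real.log k - Real.log n - Real.log x - 1 / (2 * x)

lemma f_hasDerivAt (n k : ℕ) {x : ℝ} (hx : 0 < x) :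
    HasDerivAt (f n k) (fderiv' n k x) x := by
  have h1 : HasDerivAt (fun y : ℝ => y * Real.log k) (Real.log k) x := by
    simpa using (hasDerivAt_id x).mul_const (Real.log k)
  have h2 : HasDerivAt (fun y : ℝ => (y + 1/2) * Real.log y)
      (1 * Real.log x + (x + 1/2) * x⁻¹) x :=
    ((hasDerivAt_id x).add_const (1/2 : ℝ)).mul (Real.hasDerivAt_log hx.ne')
  have h3 : HasDerivAt (fun y : ℝ => (y - 1) * Real.log n) (Real.log n) x := by
    simpa using ((hasDerivAt_id x).sub_const (1 : ℝ)).mul_const (Real.log n)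
  have h := ((h1.add (hasDerivAt_id x)).sub h2).sub h3
  refine h.congr_deriv ?_
  unfold fderiv'
  field_simp
  ring

lemma fderiv'_strictAnti (n k : ℕ) : StrictAntiOn (fderiv' n k) (Set.Ici 1) := by
  intro a ha b hb hab
  simp only [Set.mem_Ici] at ha hb
  have ha0 : (0:ℝ) < a := lt_of_lt_of_le one_pos ha
  have hb0 : (0:ℝ) < b := lt_of_lt_of_le one_pos hb
  have hq : (0:ℝ) < a / b := div_pos ha0 hb0
  have hne : a / b ≠ 1 := by
    intro h
    have : a = b := by field_simp at h; linarith
    linarith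
  have hlog : Real.log (a / b) < a / b - 1 := Real.log_lt_sub_one_of_pos hq hne
  rw [Real.log_div ha0.ne' hb0.ne'] at hlog
  -- log a - log b < (a - b)/b, i.e. log b - log a > (b-a)/b
  unfold fderiv'
  have key : 1 / (2 * a) - 1 / (2 * b) < Real.log b - Real.log a := by
    have h1 : 1 / (2 * a) - 1 / (2 * b) = (b - a) / (2 * a * b) := by
      field_simp
    have h2 : (b - a) / (2 * a * b) ≤ (b - a) / (2 * b) := by
      apply div_le_div_of_nonneg_left (by linarith) (by positivity)
      nlinarith
    have h3 : (b - a) / (2 * b) < (b - a) / b := by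
      apply div_lt_div_of_pos_left (by linarith) hb0
      linarith
    have h4 : (b - a) / b < Real.log b - Real.log a := by
      have : a / b - 1 = (a - b) / b := by field_simp
      rw [this] at hlog
      have : (a - b) / b = -((b - a) / b) := by ring
      linarith [hlog.trans_eq this]
    linarith
  linarith

/-- `f` has a unique zero in `(0, ∞)`. -/
theorem unique_positive_zero (n k : ℕ) (hn : 1 ≤ n) (hk : 1 ≤ k) :
    ∃! x : ℝ, 0 < x ∧ f n k x = 0 := by
  have hlogk : (0:ℝ) ≤ Real.log k := Real.log_nonneg (by exact_mod_cast hk)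
  have hlogn : (0:ℝ) ≤ Real.log n := Real.log_nonneg (by exact_mod_cast hn)
  -- f is positive on (0, 1]
  have hpos : ∀ x : ℝ, 0 < x → x ≤ 1 → 0 < f n k x := by
    intro x hx hx1
    have hlx : Real.log x ≤ 0 := Real.log_nonpos hx.le hx1
    unfold f
    nlinarith [mul_nonneg hx.le hlogk, mul_nonneg (by linarith : (0:ℝ) ≤ 1 - x) hlogn,
      mul_nonpos_of_nonneg_of_nonpos (by linarith : (0:ℝ) ≤ x + 1/2) hlx]
  have hf1 : 0 < f n k 1 := hpos 1 one_pos le_rfl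
  -- f is negative at M = exp (log k + 2)
  set M : ℝ := Real.exp (Real.log k + 2) with hM
  have hM1 : (1:ℝ) < M := by
    rw [hM]
    calc (1:ℝ) = Real.exp 0 := Real.exp_zero.symm
    _ < Real.exp (Real.log k + 2) := Real.exp_lt_exp.mpr (by linarith)
  have hlogM : Real.log M = Real.log k + 2 := by rw [hM, Real.log_exp]
  have hfM : f n k M < 0 := by
    unfold f
    rw [hlogM]
    nlinarith [mul_nonneg (by linarith : (0:ℝ) ≤ M - 1) hlogn]
  -- continuity
  have hcont : ∀ a b : ℝ, 0 < a → ContinuousOn (f n k) (Set.Icc a b) := by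
    intro a b ha
    intro x hx
    exact (f_hasDerivAt n k (lt_of_lt_of_le ha hx.1)).continuousAt.continuousWithinAt
  -- existence by IVT on [1, M]
  obtain ⟨x₀, hx₀mem, hx₀⟩ : ∃ x ∈ Set.Icc (1:ℝ) M, f n k x = 0 := by
    have := intermediate_value_Icc' hM1.le (hcont 1 M one_pos)
    have h0 : (0:ℝ) ∈ Set.Icc (f n k M) (f n k 1) := ⟨hfM.le, hf1.le⟩
    obtain ⟨x, hxmem, hx⟩ := this h0
    exact ⟨x, hxmem, hx⟩
  have hx₀pos : 0 < x₀ := lt_of_lt_of_le one_pos hx₀mem.1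
  refine ⟨x₀, ⟨hx₀pos, hx₀⟩, ?_⟩
  -- uniqueness
  have key : ∀ p q : ℝ, 0 < p → f n k p = 0 → 0 < q → f n k q = 0 → p < q → False := by
    intro p q hp hfp hq hfq hpq
    have hp1 : 1 < p := by
      by_contra h
      push_neg at h
      exact absurd hfp (ne_of_gt (hpos p hp h))
    -- MVT on [1, p]
    obtain ⟨c, hc, hc'⟩ := exists_hasDerivAt_eq_slope (f n k) (fderiv' n k) hp1
      (hcont 1 p one_pos)
      (fun x hx => f_hasDerivAt n k (lt_of_lt_of_le one_pos hx.1.le))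
    -- MVT on [p, q]
    obtain ⟨d, hd, hd'⟩ := exists_hasDerivAt_eq_slope (f n k) (fderiv' n k) hpq
      (hcont p q hp)
      (fun x hx => f_hasDerivAt n k (lt_trans hp hx.1))
    rw [hfp, hfq] at hd'
    rw [hfp] at hc'
    simp at hd'
    have hcneg : fderiv' n k c < 0 := by
      rw [hc']
      apply div_neg_of_neg_of_pos <;> linarith
    have hcd : c < d := lt_trans hc.2 hd.1
    have := fderiv'_strictAnti n k (Set.mem_Ici.mpr hc.1.le) (Set.mem_Ici.mpr (le_of_lt (lt_trans hp1 hd.1))) hcd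
    rw [hd'] at this
    linarith
  rintro y ⟨hy, hfy⟩
  rcases lt_trichotomy y x₀ with h | h | h
  · exact (key y x₀ hy hfy hx₀pos hx₀ h).elim
  · exact h
  · exact (key x₀ y hx₀pos hx₀ hy hfy h).elim
end

section
/- Let ν(n,k) be the unique positive zero of f_{n,k}(x) = x·log k + x − (x + 1/2)·log x − (x − 1)·log n, and write ν(n) := ν(n,n). Then n ↦ ν(n) is strictly increasing. -/
noncomputable def gAux (x : ℝ) : ℝ := (x + 1/2) * Real.log x - x

lemma gAux_deriv_pos {x : ℝ} (hx : 0 < x) :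
    0 < Real.log x + 1 / (2 * x) := by
  rcases le_or_gt 1 x with h | h
  · have h1 : 0 ≤ Real.log x := Real.log_nonneg h
    have h2 : 0 < 1 / (2 * x) := by positivity
    linarith
  · set s := Real.sqrt x with hs
    have hs0 : 0 < s := Real.sqrt_pos.mpr hx
    have hs1 : s < 1 := by
      rw [hs, show (1:ℝ) = Real.sqrt 1 by simp]
      exact Real.sqrt_lt_sqrt (le_of_lt hx) h
    have hsq : s ^ 2 = x := Real.sq_sqrt hx.le
    have hlogx : Real.log x = 2 * Real.log s := by
      rw [← hsq, Real.log_pow]; push_cast; ring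
    have hinv : (1:ℝ)/s ≠ 1 := by
      intro hc
      have : s = 1 := by field_simp at hc; linarith
      linarith
    have hlt : Real.log (1/s) < 1/s - 1 :=
      Real.log_lt_sub_one_of_pos (by positivity) hinv
    have hlogs : Real.log s > -(1/s - 1) := by
      rw [Real.log_div one_ne_zero (ne_of_gt hs0), Real.log_one] at hlt
      linarith
    have key : -2 * (1/s - 1) + 1 / (2 * s ^ 2) ≥ 0 := by
      have h1 : (0:ℝ) ≤ (2*s - 1)^2 := sq_nonneg _
      have h2 : -2 * (1/s - 1) + 1 / (2 * s ^ 2) = (2*s - 1)^2 / (2 * s^2) := by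
        field_simp; ring
      rw [h2]; positivity
    rw [hlogx, ← hsq]
    nlinarith [hlogs, key]

lemma gAux_strictMonoOn : StrictMonoOn gAux (Set.Ioi 0) := by
  have hderiv : ∀ x ∈ interior (Set.Ioi (0:ℝ)), 0 < deriv gAux x := by
    intro x hx
    rw [interior_Ioi] at hx
    have hx0 : (0:ℝ) < x := hx
    have h1 : HasDerivAt gAux (Real.log x + 1 / (2 * x)) x := by
      have h2 : HasDerivAt (fun y : ℝ => (y + 1/2) * Real.log y)
          (1 * Real.log x + (x + 1/2) * x⁻¹) x := by
        exact ((hasDerivAt_id x).add_const (1/2)).mul (Real.hasDerivAt_log (ne_of_gt hx0))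
      have h3 : HasDerivAt gAux (1 * Real.log x + (x + 1/2) * x⁻¹ - 1) x :=
        h2.sub (hasDerivAt_id x)
      convert h3 using 1
      field_simp
      ring
    rw [h1.deriv]
    exact gAux_deriv_pos hx0
  apply strictMonoOn_of_deriv_pos (convex_Ioi 0) ?_ hderiv
  apply continuousOn_of_forall_continuousAt
  intro x hx
  have hx0 : (0:ℝ) < x := hx
  exact ((continuousAt_id.add continuousAt_const).mul
    (Real.continuousAt_log (ne_of_gt hx0))).sub continuousAt_id

/-- `ν(n) := ν(n,n)`, the unique positive zero of `f_{n,n}`, is strictly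
increasing in `n`. -/
theorem nu_diag_strictMono (n₁ n₂ : ℕ) (hn₁ : 1 ≤ n₁) (hlt : n₁ < n₂)
    (ν₁ ν₂ : ℝ)
    (hν₁ : 0 < ν₁ ∧ f n₁ n₁ ν₁ = 0) (hν₂ : 0 < ν₂ ∧ f n₂ n₂ ν₂ = 0) :
    ν₁ < ν₂ := by
  obtain ⟨h1, hf1⟩ := hν₁
  obtain ⟨h2, hf2⟩ := hν₂
  have hg1 : gAux ν₁ = Real.log n₁ := by
    unfold f at hf1; unfold gAux; linarith [hf1]
  have hg2 : gAux ν₂ = Real.log n₂ := by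
    unfold f at hf2; unfold gAux; linarith [hf2]
  have hlog : Real.log n₁ < Real.log n₂ := by
    apply Real.log_lt_log
    · exact_mod_cast Nat.lt_of_lt_of_le Nat.zero_lt_one hn₁
    · exact_mod_cast hlt
  have := gAux_strictMonoOn.lt_iff_lt (Set.mem_Ioi.mpr h1) (Set.mem_Ioi.mpr h2)
  rw [← this] at *
  · rw [hg1, hg2]; exact hlog
end

section
/- If k(n) = Θ(n) (i.e. there exist constants 0 < c₁ ≤ c₂ with c₁ n ≤ k(n) ≤ c₂ n for all large n), then ν(n, k(n)) = (1 + o(1))·log n / log log n as n → ∞, where ν(n,k) is the unique positive zero of f_{n,k}(x) = x·log k + x − (x + 1/2)·log x − (x − 1)·log n. -/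
open Filter Real Topology in
/-- If `k(n) = Θ(n)`, then `ν(n, k(n)) = (1 + o(1))·log n / log log n`, where
`ν(n,k)` is the unique positive zero of `f_{n,k}`. -/
theorem nu_asymp_of_k_linear (k : ℕ → ℕ) (c₁ c₂ : ℝ) (hc₁ : 0 < c₁)
    (hc : c₁ ≤ c₂)
    (hbound : ∀ᶠ n : ℕ in Filter.atTop,
      c₁ * (n : ℝ) ≤ (k n : ℝ) ∧ (k n : ℝ) ≤ c₂ * (n : ℝ))
    (ν : ℕ → ℝ) (hν : ∀ n, 1 ≤ n → 0 < ν n ∧ f n (k n) (ν n) = 0) :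
    Filter.Tendsto
      (fun n : ℕ => ν n * Real.log (Real.log n) / Real.log n)
      Filter.atTop (nhds 1) := by
  set L : ℕ → ℝ := fun n => Real.log n with hLdef
  set a : ℕ → ℝ := fun n => Real.log (k n) - Real.log n + 1 with hadef
  have hL : Tendsto L atTop atTop :=
    Real.tendsto_log_atTop.comp tendsto_natCast_atTop_atTop
  set A : ℝ := max |Real.log c₁ + 1| |Real.log c₂ + 1| with hAdef
  have hA0 : (0:ℝ) ≤ A := le_trans (abs_nonneg _) (le_max_left _ _)
  -- basic eventual facts
  have hbasic : ∀ᶠ n : ℕ in atTop,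
      0 < ν n ∧
      (ν n + 1/2) * Real.log (ν n) = a n * ν n + L n ∧
      |a n| ≤ A := by
    filter_upwards [hbound, eventually_ge_atTop 1] with n hb hn
    have hx0 : 0 < ν n := (hν n hn).1
    have heq0 := (hν n hn).2
    simp only [f] at heq0
    have hn0 : (0:ℝ) < (n:ℝ) := by exact_mod_cast Nat.lt_of_lt_of_le Nat.zero_lt_one hn
    have hk0 : (0:ℝ) < (k n : ℝ) := lt_of_lt_of_le (by positivity) hb.1
    refine ⟨hx0, by simp only [hadef, hLdef]; linear_combination -heq0, ?_⟩
    have h1 : Real.log c₁ + Real.log n ≤ Real.log (k n) := by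
      have := Real.log_le_log (by positivity) hb.1
      rwa [Real.log_mul (ne_of_gt hc₁) (ne_of_gt hn0)] at this
    have h2 : Real.log (k n) ≤ Real.log c₂ + Real.log n := by
      have := Real.log_le_log hk0 hb.2
      rwa [Real.log_mul (ne_of_gt (lt_of_lt_of_le hc₁ hc)) (ne_of_gt hn0)] at this
    have hl : Real.log c₁ + 1 ≤ a n := by simp only [hadef]; linarith
    have hr : a n ≤ Real.log c₂ + 1 := by simp only [hadef]; linarith
    have e1 : |Real.log c₁ + 1| ≤ A := le_max_left _ _
    have e2 : |Real.log c₂ + 1| ≤ A := le_max_right _ _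
    rw [abs_le]
    constructor
    · have := neg_abs_le (Real.log c₁ + 1); linarith
    · have := le_abs_self (Real.log c₂ + 1); linarith
  clear_value L a A
  -- ν → ∞
  have htop : Tendsto ν atTop atTop := by
    rw [tendsto_atTop]
    intro b
    set M : ℝ := max b 1 with hM
    have hM1 : (1:ℝ) ≤ M := le_max_right _ _
    have hbM : b ≤ M := le_max_left _ _
    clear_value M
    filter_upwards [hbasic,
      hL.eventually_ge_atTop ((M + 1/2) * Real.log M + A * M + 1)] with n hbn hLn
    obtain ⟨hx0, heq, ha⟩ := hbn
    by_contra hlt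
    push_neg at hlt
    have hxM : ν n < M := lt_of_lt_of_le hlt hbM
    have h1 : (ν n + 1/2) * Real.log (ν n) ≤ (M + 1/2) * Real.log M := by
      rcases le_or_gt (Real.log (ν n)) 0 with h | h
      · have h2 : 0 ≤ (M + 1/2) * Real.log M :=
          mul_nonneg (by linarith) (Real.log_nonneg hM1)
        nlinarith
      · have hlog : Real.log (ν n) ≤ Real.log M := Real.log_le_log hx0 hxM.le
        nlinarith
    have h2 : -(A * M) ≤ a n * ν n := by
      have h3 := (abs_le.1 ha).1
      nlinarith [mul_nonneg (by linarith : (0:ℝ) ≤ a n + A) hx0.le,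
        mul_nonneg hA0 (by linarith : (0:ℝ) ≤ M - ν n)]
    linarith
  have hlogtop : Tendsto (fun n => Real.log (ν n)) atTop atTop :=
    Real.tendsto_log_atTop.comp htop
  -- eventual bounds
  have hkey : ∀ᶠ n : ℕ in atTop,
      0 ≤ ν n / L n ∧ ν n / L n ≤ 2 / Real.log (ν n) ∧
      0 ≤ Real.log (ν n) / L n ∧
      Real.log (ν n) / L n ≤ (Real.log 2 + Real.log (L n)) / L n := by
    filter_upwards [hbasic, hlogtop.eventually_ge_atTop (max (2*A) 1),
      hL.eventually_gt_atTop 0] with n hbn hlx hL0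
    obtain ⟨hx0, heq, ha⟩ := hbn
    have hlx1 : (1:ℝ) ≤ Real.log (ν n) := le_trans (le_max_right _ _) hlx
    have hlxA : 2*A ≤ Real.log (ν n) := le_trans (le_max_left _ _) hlx
    have hax : a n * ν n ≤ A * ν n := by
      nlinarith [(abs_le.1 ha).2, hx0.le]
    have hxlx : ν n * Real.log (ν n) ≤ 2 * L n := by
      nlinarith [mul_nonneg hx0.le (by linarith : (0:ℝ) ≤ Real.log (ν n) - 2*A)]
    have hx2L : ν n ≤ 2 * L n := by
      nlinarith [mul_le_mul_of_nonneg_left hlx1 hx0.le]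
    refine ⟨div_nonneg hx0.le hL0.le, ?_, div_nonneg (by linarith) hL0.le, ?_⟩
    · rw [div_le_div_iff₀ hL0 (by linarith : (0:ℝ) < Real.log (ν n))]
      linarith
    · have hlog2L : Real.log (ν n) ≤ Real.log 2 + Real.log (L n) := by
        have h := Real.log_le_log hx0 hx2L
        rwa [Real.log_mul two_ne_zero (ne_of_gt hL0)] at h
      gcongr
  -- ν/L → 0
  have hxLz : Tendsto (fun n => ν n / L n) atTop (𝓝 0) := by
    refine tendsto_of_tendsto_of_tendsto_of_le_of_le' tendsto_const_nhds
      (tendsto_const_nhds.div_atTop hlogtop)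
      (hkey.mono fun n h => h.1) (hkey.mono fun n h => h.2.1)
  -- log ν / L → 0
  have hlogdivL : Tendsto (fun n => Real.log (ν n) / L n) atTop (𝓝 0) := by
    have hupper : Tendsto (fun n => (Real.log 2 + Real.log (L n)) / L n) atTop (𝓝 0) := by
      have h1 : Tendsto (fun n => Real.log 2 / L n) atTop (𝓝 0) :=
        tendsto_const_nhds.div_atTop hL
      have h2 : Tendsto (fun n => Real.log (L n) / L n) atTop (𝓝 0) :=
        (Real.isLittleO_log_id_atTop.tendsto_div_nhds_zero).comp hL
      have := h1.add h2
      simp only [add_zero] at this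
      refine this.congr fun n => ?_
      rw [add_div]
    refine tendsto_of_tendsto_of_tendsto_of_le_of_le' tendsto_const_nhds hupper
      (hkey.mono fun n h => h.2.2.1) (hkey.mono fun n h => h.2.2.2)
  -- a * (ν/L) → 0
  have haxL : Tendsto (fun n => a n * (ν n / L n)) atTop (𝓝 0) := by
    apply squeeze_zero_norm' (a := fun n => A * (ν n / L n))
    · filter_upwards [hbasic, hkey] with n hbn hk
      rw [Real.norm_eq_abs, abs_mul]
      have := abs_of_nonneg hk.1
      calc |a n| * |ν n / L n| ≤ A * |ν n / L n| :=
            mul_le_mul_of_nonneg_right hbn.2.2 (abs_nonneg _)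
        _ = A * (ν n / L n) := by rw [this]
    · have := hxLz.const_mul A
      simpa using this
  -- ν log ν / L → 1
  have hx1 : Tendsto (fun n => ν n * Real.log (ν n) / L n) atTop (𝓝 1) := by
    have hrhs : Tendsto (fun n => 1 + a n * (ν n / L n) - (1/2) * (Real.log (ν n) / L n))
        atTop (𝓝 1) := by
      have := (tendsto_const_nhds (x := (1:ℝ)) (f := atTop)).add haxL |>.sub
        (hlogdivL.const_mul (1/2))
      simpa using this
    refine hrhs.congr' ?_
    filter_upwards [hbasic, hL.eventually_gt_atTop 0] with n hbn hL0
    obtain ⟨hx0, heq, ha⟩ := hbn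
    have e1 : 1 + a n * (ν n / L n) - 1/2 * (Real.log (ν n) / L n)
        = (a n * ν n + L n - 1/2 * Real.log (ν n)) / L n := by
      rw [eq_div_iff hL0.ne']
      field_simp
      ring
    have e2 : ν n * Real.log (ν n) = a n * ν n + L n - 1/2 * Real.log (ν n) := by
      linear_combination heq
    rw [e1, e2]
  -- log L / log ν → 1
  have hd : Tendsto (fun n => Real.log (ν n) + Real.log (Real.log (ν n)) - Real.log (L n))
      atTop (𝓝 0) := by
    have hcomp : Tendsto (fun n => Real.log (ν n * Real.log (ν n) / L n)) atTop (𝓝 0) := by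
      have := (Real.continuousAt_log one_ne_zero).tendsto.comp hx1
      simpa [Function.comp_def] using this
    refine hcomp.congr' ?_
    filter_upwards [hbasic, hlogtop.eventually_ge_atTop 1, hL.eventually_gt_atTop 0]
      with n hbn hlx hL0
    have hx0 := hbn.1
    rw [Real.log_div (by positivity) (ne_of_gt hL0),
      Real.log_mul (ne_of_gt hx0) (by linarith)]
  have hll : Tendsto (fun n => Real.log (Real.log (ν n)) / Real.log (ν n)) atTop (𝓝 0) :=
    (Real.isLittleO_log_id_atTop.tendsto_div_nhds_zero).comp hlogtop
  have hinv : Tendsto (fun n => (Real.log (ν n))⁻¹) atTop (𝓝 0) :=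
    tendsto_inv_atTop_zero.comp hlogtop
  have hratio : Tendsto (fun n => Real.log (L n) / Real.log (ν n)) atTop (𝓝 1) := by
    have hrhs : Tendsto (fun n => 1 + Real.log (Real.log (ν n)) / Real.log (ν n)
        - (Real.log (ν n) + Real.log (Real.log (ν n)) - Real.log (L n)) * (Real.log (ν n))⁻¹)
        atTop (𝓝 1) := by
      have := (tendsto_const_nhds (x := (1:ℝ)) (f := atTop)).add hll |>.sub (hd.mul hinv)
      simpa using this
    refine hrhs.congr' ?_
    filter_upwards [hlogtop.eventually_ge_atTop 1] with n hlx
    have hlx0 : Real.log (ν n) ≠ 0 := by positivity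
    field_simp
    ring
  -- conclusion
  have := hx1.mul hratio
  rw [mul_one] at this
  refine this.congr' ?_
  filter_upwards [hlogtop.eventually_ge_atTop 1, hL.eventually_gt_atTop 0] with n hlx hL0
  have hlx0 : Real.log (ν n) ≠ 0 := by positivity
  simp only [hLdef] at hL0 ⊢
  field_simp
end

section
/- If k(n) = o(n·log n), then ν(n, k(n)) = o(log n), i.e. ν(n,k(n))/log n → 0 as n → ∞, where ν(n,k) is the unique positive zero of f_{n,k}(x) = x·log k + x − (x + 1/2)·log x − (x − 1)·log n. -/
/-- If `k(n) = o(n·log n)`, then `ν(n, k(n)) = o(log n)`, where `ν(n,k)` is the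
unique positive zero of `f_{n,k}`. -/
theorem nu_small_o_log (k : ℕ → ℕ) (hk : ∀ n, 1 ≤ k n)
    (hbound : Filter.Tendsto
      (fun n : ℕ => (k n : ℝ) / ((n : ℝ) * Real.log n)) Filter.atTop (nhds 0))
    (ν : ℕ → ℝ) (hν : ∀ n, 1 ≤ n → 0 < ν n ∧ f n (k n) (ν n) = 0) :
    Filter.Tendsto (fun n : ℕ => ν n / Real.log n) Filter.atTop (nhds 0) := by
  rw [Metric.tendsto_atTop] at hbound ⊢
  intro ε hε
  obtain ⟨N1, hN1⟩ := hbound (ε * Real.exp (-1 - 2/ε)) (by positivity)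
  have hlog : Filter.Tendsto (fun n : ℕ => Real.log n) Filter.atTop Filter.atTop :=
    Real.tendsto_log_atTop.comp tendsto_natCast_atTop_atTop
  obtain ⟨N2, hN2⟩ := Filter.eventually_atTop.mp (hlog.eventually_ge_atTop (max 1 (1/ε)))
  refine ⟨max (max N1 N2) 1, fun n hn => ?_⟩
  have hn1 : N1 ≤ n := le_trans (le_trans (le_max_left _ _) (le_max_left _ _)) hn
  have hn2 : N2 ≤ n := le_trans (le_trans (le_max_right _ _) (le_max_left _ _)) hn
  have hn3 : 1 ≤ n := le_trans (le_max_right _ _) hn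
  set L := Real.log n with hLdef
  have hL1 : (1:ℝ) ≤ L := le_trans (le_max_left _ _) (hN2 n hn2)
  have hLε : 1/ε ≤ L := le_trans (le_max_right _ _) (hN2 n hn2)
  have hL0 : (0:ℝ) < L := by linarith
  have hn0 : (0:ℝ) < n := by exact_mod_cast hn3
  have hk0 : (0:ℝ) < k n := by exact_mod_cast hk n
  set c := (k n : ℝ) / ((n:ℝ) * L) with hc
  have hc0 : 0 < c := by positivity
  have hcε : c < ε * Real.exp (-1 - 2/ε) := by
    have := hN1 n hn1
    rwa [Real.dist_eq, sub_zero, abs_of_pos hc0] at this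
  have hlogc : Real.log c < Real.log ε + (-1 - 2/ε) := by
    calc Real.log c < Real.log (ε * Real.exp (-1 - 2/ε)) := Real.log_lt_log hc0 hcε
    _ = Real.log ε + (-1 - 2/ε) := by
        rw [Real.log_mul (ne_of_gt hε) (Real.exp_ne_zero _), Real.log_exp]
  have hlogk : Real.log (k n) = Real.log c + L + Real.log L := by
    have hkc : (k n : ℝ) = c * ((n:ℝ) * L) := by
      rw [hc, div_mul_cancel₀]
      positivity
    rw [hkc, Real.log_mul (ne_of_gt hc0) (by positivity),
      Real.log_mul (ne_of_gt hn0) (ne_of_gt hL0)]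
    ring
  have key : ∀ x : ℝ, ε * L ≤ x → f n (k n) x < 0 := by
    intro x hx
    have hεL : 0 < ε * L := by positivity
    have hx0 : 0 < x := lt_of_lt_of_le hεL hx
    have hx1 : (1:ℝ) ≤ x := by
      have h1 : (1:ℝ) ≤ ε * L := by
        have := mul_le_mul_of_nonneg_left hLε (le_of_lt hε)
        calc (1:ℝ) = ε * (1/ε) := by field_simp
        _ ≤ ε * L := this
      linarith
    have hlogx : Real.log ε + Real.log L ≤ Real.log x := by
      rw [← Real.log_mul (ne_of_gt hε) (ne_of_gt hL0)]
      exact Real.log_le_log hεL hx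
    have hA : Real.log (k n) + 1 - Real.log x - L ≤ -(2/ε) := by
      rw [hlogk]; linarith
    have hlogx0 : 0 ≤ Real.log x := Real.log_nonneg hx1
    have h1 : x * (Real.log (k n) + 1 - Real.log x - L) ≤ x * (-(2/ε)) :=
      mul_le_mul_of_nonneg_left hA (le_of_lt hx0)
    have hneg : -(2/ε) ≤ 0 := by
      have : 0 < 2/ε := by positivity
      linarith
    have h2 : x * (-(2/ε)) ≤ (ε * L) * (-(2/ε)) := mul_le_mul_of_nonpos_right hx hneg
    have h3 : (ε * L) * (-(2/ε)) = -(2*L) := by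
      field_simp
    have hf : f n (k n) x = x * (Real.log (k n) + 1 - Real.log x - L)
        - (1/2) * Real.log x + L := by
      simp only [f, ← hLdef]; ring
    rw [hf]
    nlinarith [hL0, hlogx0]
  obtain ⟨hνpos, hνzero⟩ := hν n hn3
  have hνlt : ν n < ε * L := by
    by_contra h
    push_neg at h
    exact absurd hνzero (ne_of_lt (key _ h))
  rw [Real.dist_eq, sub_zero, abs_of_pos (by positivity)]
  rw [div_lt_iff₀ hL0]
  linarith
end

section
/- Fix n ≥ t ≥ 1. The number of forests on vertex set {1,…,n} with exactly t trees such that vertices 1,…,t lie in pairwise different trees equals t·n^{n−t−1}. -/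
set_option linter.unusedSectionVars false
set_option maxHeartbeats 1000000


open Function

variable {V : Type} [DecidableEq V]

/-- `p` is a parent function with root set `R`. -/
def IsPF (R : Finset V) (p : V → V) : Prop :=
  (∀ v ∈ R, p v = v) ∧ ∀ v, ∃ k, p^[k] v ∈ R

namespace IsPF

variable {R : Finset V} {p : V → V}

theorem iterate_mem_of_mem (hp : IsPF R p) {v : V} {k j : ℕ} (h : p^[k] v ∈ R)
    (hkj : k ≤ j) : p^[j] v = p^[k] v := by
  induction j with
  | zero => have : k = 0 := Nat.le_zero.mp hkj; subst this; rfl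
  | succ n ih =>
    rcases Nat.lt_or_ge k (n+1) with hlt | hge
    · have hn : k ≤ n := by omega
      rw [Function.iterate_succ_apply', ih hn, hp.1 _ h]
    · have : k = n + 1 := by omega
      subst this; rfl

/-- Depth of a vertex: number of steps to reach a root. -/
def depth (hp : IsPF R p) (v : V) : ℕ := Nat.find (hp.2 v)

theorem depth_spec (hp : IsPF R p) (v : V) : p^[hp.depth v] v ∈ R :=
  Nat.find_spec (hp.2 v)

theorem depth_min (hp : IsPF R p) {v : V} {k : ℕ} (h : p^[k] v ∈ R) :
    hp.depth v ≤ k := Nat.find_min' _ h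

theorem depth_eq_zero_iff (hp : IsPF R p) {v : V} : hp.depth v = 0 ↔ v ∈ R := by
  constructor
  · intro h
    have := hp.depth_spec v
    rwa [h] at this
  · intro h
    exact Nat.le_zero.mp (hp.depth_min (k := 0) h)

/-- The root of the tree containing `v`. -/
def root (hp : IsPF R p) (v : V) : V := p^[hp.depth v] v

theorem root_mem (hp : IsPF R p) (v : V) : hp.root v ∈ R := hp.depth_spec v

theorem root_eq_of_mem (hp : IsPF R p) {v : V} {k : ℕ} (h : p^[k] v ∈ R) :
    hp.root v = p^[k] v := by
  rcases le_or_gt k (hp.depth v) with hle | hlt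
  · exact hp.iterate_mem_of_mem h hle
  · exact (hp.iterate_mem_of_mem (hp.depth_spec v) hlt.le).symm

theorem root_of_mem (hp : IsPF R p) {v : V} (h : v ∈ R) : hp.root v = v :=
  hp.root_eq_of_mem (k := 0) h

theorem root_apply (hp : IsPF R p) (v : V) : hp.root (p v) = hp.root v := by
  obtain ⟨k, hk⟩ := hp.2 (p v)
  have hk' : p^[k+1] v ∈ R := by rwa [Function.iterate_succ_apply]
  rw [hp.root_eq_of_mem hk, hp.root_eq_of_mem hk', Function.iterate_succ_apply]

theorem depth_apply (hp : IsPF R p) {v : V} (h : v ∉ R) :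
    hp.depth v = hp.depth (p v) + 1 := by
  have h1 : hp.depth v ≠ 0 := fun hh => h (hp.depth_eq_zero_iff.mp hh)
  obtain ⟨m, hm⟩ : ∃ m, hp.depth v = m + 1 := ⟨_, (Nat.succ_pred_eq_of_ne_zero h1).symm⟩
  have hmem : p^[m] (p v) ∈ R := by
    have := hp.depth_spec v; rw [hm] at this; rwa [← Function.iterate_succ_apply]
  have hle : hp.depth (p v) ≤ m := hp.depth_min hmem
  have hge : m ≤ hp.depth (p v) := by
    by_contra hlt
    push_neg at hlt
    have h2 : p^[hp.depth (p v) + 1] v ∈ R := by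
      rw [Function.iterate_succ_apply]; exact hp.depth_spec (p v)
    have := hp.depth_min h2
    omega
  omega

theorem depth_iterate_le (hp : IsPF R p) (v : V) (k : ℕ) :
    hp.depth (p^[k] v) ≤ hp.depth v := by
  induction k with
  | zero => rfl
  | succ n ih =>
    rw [Function.iterate_succ_apply']
    by_cases h : p^[n] v ∈ R
    · rw [hp.1 _ h]; exact ih
    · have := hp.depth_apply h
      omega

theorem root_iterate (hp : IsPF R p) (v : V) (k : ℕ) :
    hp.root (p^[k] v) = hp.root v := by
  induction k with
  | zero => rfl
  | succ n ih => rw [Function.iterate_succ_apply', hp.root_apply, ih]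

end IsPF

/-- The count of parent forests on `n` vertices with `t` roots. -/
def forestCount (n t : ℕ) : ℕ := if t = n then 1 else t * n ^ (n - t - 1)

theorem binom_pow (m z : ℕ) :
    ∑ j ∈ Finset.range (m+1), m.choose j * z ^ (m - j) = (z+1) ^ m := by
  have h := add_pow (1 : ℕ) z m
  rw [add_comm z 1]
  rw [h]
  exact Finset.sum_congr rfl fun j hj => by push_cast; ring

theorem binom_pow' (m z : ℕ) :
    ∑ j ∈ Finset.range (m+1), j * (m.choose j * z ^ (m - j)) = m * (z+1) ^ (m-1) := by
  cases m with
  | zero => simp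
  | succ n =>
    rw [Finset.sum_range_succ']
    simp only [Nat.zero_mul, add_zero]
    have key : ∀ i, (i+1) * ((n+1).choose (i+1) * z ^ (n + 1 - (i+1)))
        = (n+1) * (n.choose i * z ^ (n - i)) := by
      intro i
      have h := Nat.add_one_mul_choose_eq n i
      have : n + 1 - (i + 1) = n - i := by omega
      rw [this]
      calc (i+1) * ((n+1).choose (i+1) * z ^ (n - i))
          = ((n+1).choose (i+1) * (i+1)) * z ^ (n - i) := by ring
        _ = ((n+1) * n.choose i) * z ^ (n - i) := by rw [← h]
        _ = (n+1) * (n.choose i * z ^ (n - i)) := by ring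
    rw [Finset.sum_congr rfl fun i _ => key i, ← Finset.mul_sum, binom_pow]
    simp

theorem abel_identity (s m : ℕ) (hm : 1 ≤ m) :
    ∑ j ∈ Finset.range (m+1), m.choose j * forestCount (s+m) (s+j)
      = (s+1) * (s+m+1) ^ (m-1) := by
  set z := s + m with hz
  have hzpos : 0 < z := by omega
  -- rewrite each term
  have hterm : ∀ j ∈ Finset.range m, m.choose j * forestCount (s+m) (s+j)
      = m.choose j * ((s+j) * z ^ (m - 1 - j)) := by
    intro j hj
    rw [Finset.mem_range] at hj
    have hne : s + j ≠ s + m := by omega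
    rw [forestCount, if_neg hne]
    have he : s + m - (s+j) - 1 = m - 1 - j := by omega
    rw [he]
  rw [Finset.sum_range_succ, Finset.sum_congr rfl hterm]
  have hlast : m.choose m * forestCount (s+m) (s+m) = 1 := by
    rw [forestCount, if_pos rfl, Nat.choose_self]
  rw [hlast]
  -- multiply both sides by z
  apply Nat.eq_of_mul_eq_mul_right hzpos
  have lhs_mul : (∑ j ∈ Finset.range m, m.choose j * ((s+j) * z ^ (m - 1 - j)) + 1) * z
      = ∑ j ∈ Finset.range (m+1), m.choose j * ((s+j) * z ^ (m - j)) := by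
    rw [Finset.sum_range_succ, Nat.choose_self, add_mul, one_mul, Finset.sum_mul]
    congr 1
    · apply Finset.sum_congr rfl
      intro j hj
      rw [Finset.mem_range] at hj
      have : m - 1 - j + 1 = m - j := by omega
      rw [mul_assoc, mul_assoc, ← pow_succ, this]
    · have : m - m = 0 := by omega
      rw [this, pow_zero]
      ring
  rw [lhs_mul]
  -- compute the full sum
  have hsplit : ∀ j, m.choose j * ((s+j) * z ^ (m - j))
      = s * (m.choose j * z ^ (m - j)) + j * (m.choose j * z ^ (m - j)) := by
    intro j; ring
  rw [Finset.sum_congr rfl fun j _ => hsplit j, Finset.sum_add_distrib, ← Finset.mul_sum,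
    binom_pow, binom_pow']
  -- now pure arithmetic: s*(z+1)^m + m*(z+1)^(m-1) = (s+1)*(s+m+1)^(m-1)*z
  have hN : z + 1 = s + m + 1 := by omega
  rw [hN]
  obtain ⟨m', rfl⟩ : ∃ m', m = m' + 1 := ⟨m - 1, by omega⟩
  simp only [Nat.add_sub_cancel]
  rw [pow_succ]
  rw [hz]
  ring_nf

theorem nat_card_sigma {β : Type} [Fintype β] (f : β → Type) [∀ b, Finite (f b)] :
    Nat.card ((b : β) × f b) = ∑ b, Nat.card (f b) := by
  letI : ∀ b, Fintype (f b) := fun b => Fintype.ofFinite (f b)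
  simp [Nat.card_eq_fintype_card, Fintype.card_sigma]

theorem card_isPF (n : ℕ) : ∀ (V : Type) [Fintype V] [DecidableEq V] (R : Finset V),
    Fintype.card V = n → Nat.card {p : V → V // IsPF R p} = forestCount n R.card := by
  induction n using Nat.strong_induction_on with
  | _ n IH =>
    intro V _ _ R hn
    by_cases huniv : R = Finset.univ
    · -- all vertices are roots: only the identity
      have hcard : R.card = n := by rw [huniv, Finset.card_univ, hn]
      rw [hcard, forestCount, if_pos rfl]
      haveI : Unique {p : V → V // IsPF R p} := by
        refine ⟨⟨⟨id, fun v _ => rfl, fun v => ⟨0, ?_⟩⟩⟩, ?_⟩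
        · rw [huniv]; exact Finset.mem_univ _
        · rintro ⟨p, hp⟩
          ext v
          exact hp.1 v (huniv ▸ Finset.mem_univ v)
      exact Nat.card_unique
    · have hRlt : R.card < n := by
        rw [← hn, ← Finset.card_univ]
        exact Finset.card_lt_card (Finset.ssubset_univ_iff.mpr huniv)
      by_cases hne : R = ∅
      · -- no roots, some vertex: empty
        have hpos : 0 < n := by omega
        haveI : Nonempty V := Fintype.card_pos_iff.mp (hn ▸ hpos)
        haveI : IsEmpty {p : V → V // IsPF R p} := by
          refine ⟨fun p => ?_⟩
          obtain ⟨p, hp⟩ := p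
          obtain ⟨k, hk⟩ := hp.2 (Classical.arbitrary V)
          rw [hne] at hk
          exact absurd hk (Finset.notMem_empty _)
        rw [Nat.card_of_isEmpty, hne, Finset.card_empty, forestCount, if_neg (by omega)]
        simp
      · -- main case: delete a root r
        obtain ⟨r, hr⟩ := Finset.nonempty_iff_ne_empty.mpr hne
        set t := R.card with htdef
        have ht1 : 1 ≤ t := Finset.card_pos.mpr ⟨r, hr⟩
        have hn1 : 1 ≤ n := by omega
        set V' := {x : V // x ≠ r} with hV'def
        have hV' : Fintype.card V' = n - 1 := by
          have h := Fintype.card_subtype_compl (fun x : V => x = r)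
          rw [Fintype.card_subtype_eq, hn] at h
          rw [← h]
        set Rsub : Finset V' := R.subtype (· ≠ r) with hRsubdef
        have hRsubmem : ∀ x : V', x ∈ Rsub ↔ x.val ∈ R := by
          intro x; rw [hRsubdef, Finset.mem_subtype]
        have hRsub : Rsub.card = t - 1 := by
          rw [hRsubdef, Finset.card_subtype]
          rw [Finset.filter_ne' R r]
          exact Finset.card_erase_of_mem hr
        set NR : Finset V' := Finset.univ \ Rsub with hNRdef
        have hNR : NR.card = n - t := by
          rw [hNRdef, Finset.card_sdiff_of_subset (Finset.subset_univ _), Finset.card_univ, hV', hRsub]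
          omega
        set Rext : Finset V' → Finset V' := fun J => Rsub ∪ J with hRextdef
        -- root-deletion maps
        set toJ : (V → V) → Finset V' :=
          fun p => Finset.univ.filter (fun x : V' => x.val ∉ R ∧ p x.val = r) with htoJdef
        have htoJmem : ∀ p (x : V'), x ∈ toJ p ↔ x.val ∉ R ∧ p x.val = r := by
          intro p x; rw [htoJdef]; simp
        set down : (V → V) → V' → V' :=
          fun p x => if h : p x.val = r then x else ⟨p x.val, h⟩ with hdowndef
        set up : Finset V' → (V' → V') → V → V :=
          fun J q v => if h : v = r then r else if ⟨v, h⟩ ∈ J then r else (q ⟨v, h⟩).val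
          with hupdef
        have htoJNR : ∀ p, toJ p ⊆ NR := by
          intro p x hx
          rw [htoJmem] at hx
          rw [hNRdef, Finset.mem_sdiff]
          exact ⟨Finset.mem_univ _, fun hmem => hx.1 ((hRsubmem x).mp hmem)⟩
        -- (L1)
        have L1 : ∀ p : V → V, IsPF R p → IsPF (Rext (toJ p)) (down p) := by
          intro p hp
          constructor
          · intro x hx
            rw [hRextdef, Finset.mem_union] at hx
            rcases hx with hx | hx
            · rw [hRsubmem] at hx
              have : p x.val = x.val := hp.1 _ hx
              rw [hdowndef]
              simp only
              rw [dif_neg (by rw [this]; exact x.2)]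
              exact Subtype.ext this
            · rw [htoJmem] at hx
              rw [hdowndef]
              simp only
              rw [dif_pos hx.2]
          · intro x
            obtain ⟨m, hm⟩ : ∃ m, hp.depth x.val ≤ m := ⟨_, le_refl _⟩
            induction m generalizing x with
            | zero =>
              have : x.val ∈ R := hp.depth_eq_zero_iff.mp (Nat.le_zero.mp hm)
              exact ⟨0, by rw [hRextdef]; exact Finset.mem_union_left _ ((hRsubmem x).mpr this)⟩
            | succ m ihm =>
              by_cases hxR : x.val ∈ R
              · exact ⟨0, by rw [hRextdef]; exact Finset.mem_union_left _ ((hRsubmem x).mpr hxR)⟩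
              · by_cases hpr : p x.val = r
                · refine ⟨0, ?_⟩
                  rw [hRextdef]
                  exact Finset.mem_union_right _ ((htoJmem p x).mpr ⟨hxR, hpr⟩)
                · have hdx : down p x = ⟨p x.val, hpr⟩ := by rw [hdowndef]; simp [hpr]
                  have hdepth : hp.depth (p x.val) ≤ m := by
                    have := hp.depth_apply hxR
                    omega
                  obtain ⟨k, hk⟩ := ihm ⟨p x.val, hpr⟩ hdepth
                  exact ⟨k + 1, by rw [Function.iterate_succ_apply, hdx]; exact hk⟩
        -- (L2)
        have L2 : ∀ (J : Finset V') (q : V' → V'), J ⊆ NR → IsPF (Rext J) q →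
            IsPF R (up J q) := by
          intro J q hJ hq
          have hJR : ∀ x : V', x ∈ J → x.val ∉ R := by
            intro x hx
            have := hJ hx
            rw [hNRdef, Finset.mem_sdiff] at this
            intro hxR
            exact this.2 ((hRsubmem x).mpr hxR)
          constructor
          · intro v hv
            by_cases hvr : v = r
            · rw [hupdef]; simp [hvr]
            · rw [hupdef]
              simp only
              rw [dif_neg hvr]
              rw [if_neg (fun hmem => hJR _ hmem hv)]
              have : (⟨v, hvr⟩ : V') ∈ Rext J := by
                rw [hRextdef]
                exact Finset.mem_union_left _ ((hRsubmem _).mpr hv)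
              rw [hq.1 _ this]
          · intro v
            by_cases hvr : v = r
            · exact ⟨0, by rw [hvr]; exact hr⟩
            · obtain ⟨m, hm⟩ : ∃ m, hq.depth ⟨v, hvr⟩ ≤ m := ⟨_, le_refl _⟩
              induction m generalizing v with
              | zero =>
                have hmem : (⟨v, hvr⟩ : V') ∈ Rext J := hq.depth_eq_zero_iff.mp (Nat.le_zero.mp hm)
                rw [hRextdef, Finset.mem_union] at hmem
                rcases hmem with hmem | hmem
                · exact ⟨0, (hRsubmem _).mp hmem⟩
                · refine ⟨1, ?_⟩
                  have : up J q v = r := by rw [hupdef]; simp [hvr, hmem]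
                  rw [Function.iterate_one, this]; exact hr
              | succ m ihm =>
                by_cases hmem : (⟨v, hvr⟩ : V') ∈ Rext J
                · rw [hRextdef, Finset.mem_union] at hmem
                  rcases hmem with hmem | hmem
                  · exact ⟨0, (hRsubmem _).mp hmem⟩
                  · refine ⟨1, ?_⟩
                    have : up J q v = r := by rw [hupdef]; simp [hvr, hmem]
                    rw [Function.iterate_one, this]; exact hr
                · have hnJ : (⟨v, hvr⟩ : V') ∉ J := by
                    intro hc; exact hmem (by rw [hRextdef]; exact Finset.mem_union_right _ hc)
                  have hup : up J q v = (q ⟨v, hvr⟩).val := by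
                    rw [hupdef]; simp [hvr, hnJ]
                  have hdepth : hq.depth (q ⟨v, hvr⟩) ≤ m := by
                    have := hq.depth_apply hmem
                    omega
                  have hne' : (q ⟨v, hvr⟩).val ≠ r := (q ⟨v, hvr⟩).2
                  have heta : (⟨(q ⟨v, hvr⟩).val, hne'⟩ : V') = q ⟨v, hvr⟩ := Subtype.ext rfl
                  obtain ⟨k, hk⟩ := ihm (q ⟨v, hvr⟩).val hne' (by rw [heta]; exact hdepth)
                  exact ⟨k + 1, by rw [Function.iterate_succ_apply, hup]; exact hk⟩
        -- (L3)
        have L3 : ∀ (J : Finset V') (q : V' → V'), J ⊆ NR → IsPF (Rext J) q →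
            toJ (up J q) = J := by
          intro J q hJ hq
          have hJR : ∀ x : V', x ∈ J → x.val ∉ R := by
            intro x hx
            have := hJ hx
            rw [hNRdef, Finset.mem_sdiff] at this
            intro hxR
            exact this.2 ((hRsubmem x).mpr hxR)
          ext x
          rw [htoJmem]
          constructor
          · rintro ⟨hxR, hx⟩
            rw [hupdef] at hx
            simp only at hx
            rw [dif_neg x.2] at hx
            by_cases hmem : (⟨x.val, x.2⟩ : V') ∈ J
            · rwa [Subtype.coe_eta] at hmem
            · rw [if_neg hmem] at hx
              exact absurd hx (q ⟨x.val, x.2⟩).2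
          · intro hx
            refine ⟨hJR x hx, ?_⟩
            rw [hupdef]
            simp only
            rw [dif_neg x.2, if_pos (by rwa [Subtype.coe_eta])]
        -- (L4)
        have L4 : ∀ (J : Finset V') (q : V' → V'), J ⊆ NR → IsPF (Rext J) q →
            down (up J q) = q := by
          intro J q hJ hq
          funext x
          by_cases hmem : x ∈ J
          · have hx : up J q x.val = r := by
              rw [hupdef]; simp only
              rw [dif_neg x.2, if_pos (by rwa [Subtype.coe_eta])]
            have hqx : q x = x := hq.1 _ (by rw [hRextdef]; exact Finset.mem_union_right _ hmem)
            rw [hdowndef]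
            simp only
            rw [dif_pos hx, hqx]
          · have hx : up J q x.val = (q x).val := by
              rw [hupdef]; simp only
              rw [dif_neg x.2, if_neg (by rwa [Subtype.coe_eta]), Subtype.coe_eta]
            rw [hdowndef]
            simp only
            rw [dif_neg (by rw [hx]; exact (q x).2)]
            apply Subtype.ext
            simp [hx]
        -- (L5)
        have L5 : ∀ p : V → V, IsPF R p → up (toJ p) (down p) = p := by
          intro p hp
          funext v
          by_cases hvr : v = r
          · rw [hupdef]; simp only
            rw [dif_pos hvr, hvr, hp.1 r hr]
          · by_cases hmem : (⟨v, hvr⟩ : V') ∈ toJ p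
            · rw [hupdef]; simp only
              rw [dif_neg hvr, if_pos hmem]
              rw [htoJmem] at hmem
              exact hmem.2.symm
            · have hpvr : p v ≠ r := by
                intro hc
                by_cases hvR : v ∈ R
                · exact hvr ((hp.1 v hvR).symm.trans hc)
                · exact hmem ((htoJmem p _).mpr ⟨hvR, hc⟩)
              rw [hupdef]; simp only
              rw [dif_neg hvr, if_neg hmem, hdowndef]
              simp only
              rw [dif_neg hpvr]
        -- the fiber equivalences
        have fiberEquiv : ∀ J : Finset V', J ⊆ NR →
            {a : {p : V → V // IsPF R p} // toJ a.val = J} ≃ {q : V' → V' // IsPF (Rext J) q} := by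
          intro J hJ
          refine ⟨fun a => ⟨down a.val.val, by
                    have h := L1 a.val.val a.val.2
                    rwa [a.2] at h⟩,
                  fun q => ⟨⟨up J q.val, L2 J q.val hJ q.2⟩, L3 J q.val hJ q.2⟩, ?_, ?_⟩
          · rintro ⟨⟨p, hp⟩, hfib⟩
            apply Subtype.ext
            apply Subtype.ext
            simp only
            rw [← hfib]
            exact L5 p hp
          · rintro ⟨q, hq⟩
            apply Subtype.ext
            simp only
            exact L4 J q hJ hq
        have fiberEmpty : ∀ J : Finset V', ¬ J ⊆ NR →
            IsEmpty {a : {p : V → V // IsPF R p} // toJ a.val = J} := by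
          intro J hJ
          refine ⟨fun a => hJ ?_⟩
          rw [← a.2]
          exact htoJNR a.val.val
        -- count
        have hsigma := nat_card_sigma (fun J : Finset V' =>
          {a : {p : V → V // IsPF R p} // toJ a.val = J})
        have hfib := Nat.card_congr (Equiv.sigmaFiberEquiv
          (fun a : {p : V → V // IsPF R p} => toJ a.val))
        rw [← hfib, hsigma]
        have hterm : ∀ J : Finset V', Nat.card {a : {p : V → V // IsPF R p} // toJ a.val = J}
            = if J ⊆ NR then forestCount (n-1) ((t-1) + J.card) else 0 := by
          intro J
          by_cases hJ : J ⊆ NR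
          · rw [if_pos hJ, Nat.card_congr (fiberEquiv J hJ)]
            rw [IH (n-1) (by omega) V' (Rext J) hV']
            congr 1
            have hdisj : Disjoint Rsub J := by
              refine Finset.disjoint_left.mpr fun x hx hxJ => ?_
              have := hJ hxJ
              rw [hNRdef, Finset.mem_sdiff] at this
              exact this.2 hx
            rw [hRextdef]
            simp only
            rw [Finset.card_union_of_disjoint hdisj, hRsub]
          · rw [if_neg hJ]
            haveI := fiberEmpty J hJ
            exact Nat.card_of_isEmpty
        rw [Finset.sum_congr rfl (fun J _ => hterm J)]
        have hfilt : Finset.univ.filter (fun J : Finset V' => J ⊆ NR) = NR.powerset := by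
          ext J
          simp [Finset.mem_powerset]
        rw [← Finset.sum_filter, hfilt]
        rw [Finset.sum_powerset_apply_card (fun j => forestCount (n-1) (t-1+j))]
        rw [hNR]
        have habel := abel_identity (t-1) (n-t) (by omega)
        have h1 : t - 1 + (n - t) = n - 1 := by omega
        have h2 : t - 1 + 1 = t := by omega
        rw [h1, h2] at habel
        have h4 : n - 1 + 1 = n := by omega
        rw [h4] at habel
        rw [forestCount, if_neg (by omega : t ≠ n), ← habel]
        apply Finset.sum_congr rfl
        intro j hj
        rw [smul_eq_mul]
open SimpleGraph

variable {V : Type} [Fintype V] [DecidableEq V]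

/-- The graph associated to a parent function. -/
def graphOf (R : Finset V) (p : V → V) : SimpleGraph V :=
  SimpleGraph.fromRel (fun v w => v ∉ R ∧ p v = w)

theorem graphOf_adj {R : Finset V} {p : V → V} {v w : V} :
    (graphOf R p).Adj v w ↔ v ≠ w ∧ ((v ∉ R ∧ p v = w) ∨ (w ∉ R ∧ p w = v)) :=
  SimpleGraph.fromRel_adj _ v w

namespace IsPF

variable {R : Finset V} {p : V → V}

theorem apply_ne (hp : IsPF R p) {v : V} (h : v ∉ R) : p v ≠ v := by
  intro hc
  obtain ⟨k, hk⟩ := hp.2 v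
  rw [Function.iterate_fixed hc k] at hk
  exact h hk

theorem adj_parent (hp : IsPF R p) {v : V} (h : v ∉ R) : (graphOf R p).Adj v (p v) :=
  graphOf_adj.mpr ⟨(hp.apply_ne h).symm, Or.inl ⟨h, rfl⟩⟩

theorem adj_cases (hp : IsPF R p) {v w : V} (h : (graphOf R p).Adj v w) :
    (v ∉ R ∧ p v = w ∧ hp.depth v = hp.depth w + 1) ∨
    (w ∉ R ∧ p w = v ∧ hp.depth w = hp.depth v + 1) := by
  rcases graphOf_adj.mp h with ⟨hne, hcase | hcase⟩
  · left
    refine ⟨hcase.1, hcase.2, ?_⟩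
    have := hp.depth_apply hcase.1
    rw [hcase.2] at this
    exact this
  · right
    refine ⟨hcase.1, hcase.2, ?_⟩
    have := hp.depth_apply hcase.1
    rw [hcase.2] at this
    exact this

theorem root_eq_of_adj (hp : IsPF R p) {v w : V} (h : (graphOf R p).Adj v w) :
    hp.root v = hp.root w := by
  rcases hp.adj_cases h with ⟨_, hpv, _⟩ | ⟨_, hpw, _⟩
  · rw [← hpv, hp.root_apply]
  · rw [← hpw, hp.root_apply]

theorem root_eq_of_reachable (hp : IsPF R p) {v w : V}
    (h : (graphOf R p).Reachable v w) : hp.root v = hp.root w := by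
  obtain ⟨W⟩ := h
  induction W with
  | nil => rfl
  | cons hadj W ih => rw [hp.root_eq_of_adj hadj, ih]

theorem reachable_root (hp : IsPF R p) (v : V) : (graphOf R p).Reachable v (hp.root v) := by
  obtain ⟨m, hm⟩ : ∃ m, hp.depth v ≤ m := ⟨_, le_refl _⟩
  induction m generalizing v with
  | zero =>
    have hv : v ∈ R := hp.depth_eq_zero_iff.mp (Nat.le_zero.mp hm)
    rw [hp.root_of_mem hv]
  | succ m ih =>
    by_cases hv : v ∈ R
    · rw [hp.root_of_mem hv]
    · have h1 : (graphOf R p).Reachable v (p v) := (hp.adj_parent hv).reachable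
      have h2 := ih (p v) (by have := hp.depth_apply hv; omega)
      rw [hp.root_apply] at h2
      exact h1.trans h2

theorem cycle_aux (hp : IsPF R p) {a : V} (c : (graphOf R p).Walk a a) (hc : c.IsCycle)
    (hmax : ∀ x ∈ c.support, hp.depth x ≤ hp.depth a) : False := by
  cases c with
  | nil => exact hc.not_of_nil
  | cons h q =>
    rw [Walk.cons_isCycle_iff] at hc
    obtain ⟨w, h2, q2, hq2⟩ := Walk.exists_eq_cons_of_ne h.ne q.reverse
    rename_i u
    -- u : second vertex, w : last-but-one vertex
    have hw : w ∈ q.support := by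
      have : w ∈ q.reverse.support := by
        rw [hq2, Walk.support_cons]
        exact List.mem_cons_of_mem _ q2.start_mem_support
      rwa [Walk.support_reverse, List.mem_reverse] at this
    have hu : u ∈ q.support := q.start_mem_support
    have hdu : hp.depth u ≤ hp.depth a :=
      hmax u (by rw [Walk.support_cons]; exact List.mem_cons_of_mem _ hu)
    have hdw : hp.depth w ≤ hp.depth a :=
      hmax w (by rw [Walk.support_cons]; exact List.mem_cons_of_mem _ hw)
    have e1 : p a = u := by
      rcases hp.adj_cases h with ⟨_, hh, _⟩ | ⟨_, _, hh⟩
      · exact hh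
      · omega
    have e2 : p a = w := by
      rcases hp.adj_cases h2 with ⟨_, hh, _⟩ | ⟨_, _, hh⟩
      · exact hh
      · omega
    have huw : u = w := e1 ▸ e2
    subst huw
    have hedge : s(a, u) ∈ q.reverse.edges := by
      rw [hq2, Walk.edges_cons]
      exact List.mem_cons_self
    rw [Walk.edges_reverse, List.mem_reverse] at hedge
    exact hc.2 hedge

theorem acyclic (hp : IsPF R p) : (graphOf R p).IsAcyclic := by
  intro a c hc
  have hne : c.support.toFinset.Nonempty := ⟨a, by rw [List.mem_toFinset]; exact c.start_mem_support⟩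
  obtain ⟨b, hb, hmaxb⟩ := c.support.toFinset.exists_max_image hp.depth hne
  rw [List.mem_toFinset] at hb
  have hc' := hc.rotate hb
  have hmem : ∀ x ∈ (c.rotate b hb).support, x ∈ c.support := by
    intro x hx
    by_cases hxb : x = b
    · rwa [hxb]
    · have htail : x ∈ (c.rotate b hb).support.tail := by
        have := (c.rotate b hb).support_eq_cons
        rw [this] at hx
        rcases List.mem_cons.mp hx with h | h
        · exact absurd h hxb
        · exact h
      have hperm := Walk.support_rotate c b hb
      have : x ∈ c.support.tail := hperm.perm.mem_iff.mp htail
      rw [c.support_eq_cons]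
      exact List.mem_cons_of_mem _ this
  exact hp.cycle_aux (c.rotate b hb) hc'
    (fun x hx => hmaxb x (by rw [List.mem_toFinset]; exact hmem x hx))

/-- Connected components correspond to roots. -/
noncomputable def compEquiv (hp : IsPF R p) :
    (graphOf R p).ConnectedComponent ≃ {x : V // x ∈ R} where
  toFun := ConnectedComponent.lift (fun v => ⟨hp.root v, hp.root_mem v⟩)
    (fun v w W _ => Subtype.ext (hp.root_eq_of_reachable ⟨W⟩))
  invFun := fun x => (graphOf R p).connectedComponentMk x.val
  left_inv := by
    apply ConnectedComponent.ind
    intro v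
    simp only [ConnectedComponent.lift_mk]
    exact ConnectedComponent.sound (hp.reachable_root v).symm
  right_inv := fun x => Subtype.ext (hp.root_of_mem x.2)

theorem card_comp (hp : IsPF R p) :
    Nat.card (graphOf R p).ConnectedComponent = R.card := by
  rw [Nat.card_congr hp.compEquiv, Nat.card_eq_fintype_card, Fintype.card_coe]

theorem roots_sep (hp : IsPF R p) {v w : V} (hv : v ∈ R) (hw : w ∈ R) (hne : v ≠ w) :
    ¬ (graphOf R p).Reachable v w := by
  intro h
  have := hp.root_eq_of_reachable h
  rw [hp.root_of_mem hv, hp.root_of_mem hw] at this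
  exact hne this

end IsPF

/-- Injectivity of `graphOf` on parent functions. -/
theorem graphOf_injective {R : Finset V} {p p' : V → V} (hp : IsPF R p) (hp' : IsPF R p')
    (hG : graphOf R p = graphOf R p') : p = p' := by
  funext v
  obtain ⟨m, hm⟩ : ∃ m, hp.depth v ≤ m := ⟨_, le_refl _⟩
  induction m generalizing v with
  | zero =>
    have hv : v ∈ R := hp.depth_eq_zero_iff.mp (Nat.le_zero.mp hm)
    rw [hp.1 v hv, hp'.1 v hv]
  | succ m ih =>
    by_cases hv : v ∈ R
    · rw [hp.1 v hv, hp'.1 v hv]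
    · by_contra hne
      -- the edge v-(p v) is in both graphs
      have hadj1 : (graphOf R p').Adj v (p v) := hG ▸ hp.adj_parent hv
      have hadj2 : (graphOf R p).Adj v (p' v) := hG ▸ hp'.adj_parent hv
      -- analyze hadj1 in the p'-graph
      have hc1 : p v ∉ R ∧ p' (p v) = v := by
        rcases graphOf_adj.mp hadj1 with ⟨_, ⟨_, hh⟩ | hh⟩
        · exact absurd hh (fun hx => hne hx.symm)
        · exact hh
      -- by induction, p' and p agree on p v (which has smaller depth)
      have hdepth : hp.depth (p v) ≤ m := by have := hp.depth_apply hv; omega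
      have hagree : p (p v) = p' (p v) := ih (p v) hdepth
      have : p (p v) = v := hagree.trans hc1.2
      have h1 := hp.depth_apply hc1.1
      rw [this] at h1
      have h2 := hp.depth_apply hv
      omega

theorem graphOf_surjective {R : Finset V} {G : SimpleGraph V} (hac : G.IsAcyclic)
    (hcomp : Nat.card G.ConnectedComponent = R.card)
    (hsep : ∀ v w : V, v ∈ R → w ∈ R → v ≠ w → ¬G.Reachable v w) :
    ∃ p : V → V, IsPF R p ∧ graphOf R p = G := by
  have hPU : ∀ ⦃u v : V⦄ (a b : G.Path u v), a = b := isAcyclic_iff_path_unique.mp hac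
  -- unique root in each component
  have hinj : Function.Injective (fun x : {x // x ∈ R} => G.connectedComponentMk x.val) := by
    intro x y hxy
    by_contra hne
    exact hsep x.val y.val x.2 y.2 (fun h => hne (Subtype.ext h))
      (SimpleGraph.ConnectedComponent.eq.mp hxy)
  have hsurj : Function.Surjective (fun x : {x // x ∈ R} => G.connectedComponentMk x.val) := by
    have hcard : Nat.card {x // x ∈ R} = Nat.card G.ConnectedComponent := by
      rw [hcomp, Nat.card_eq_fintype_card, Fintype.card_coe]
    exact ((Nat.bijective_iff_injective_and_card _).mpr ⟨hinj, hcard⟩).surjective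
  have hex : ∀ v : V, ∃ x : {x // x ∈ R}, G.Reachable v x.val := by
    intro v
    obtain ⟨x, hx⟩ := hsurj (G.connectedComponentMk v)
    exact ⟨x, (SimpleGraph.ConnectedComponent.eq.mp hx).symm⟩
  choose gr hgr using hex
  have hgr_unique : ∀ (v : V) (x : {x // x ∈ R}), G.Reachable v x.val → gr v = x := by
    intro v x hx
    apply hinj
    exact SimpleGraph.ConnectedComponent.sound ((hgr v).symm.trans hx)
  have hgr_self : ∀ (v : V) (hv : v ∈ R), (gr v).val = v := by
    intro v hv
    rw [hgr_unique v ⟨v, hv⟩ (SimpleGraph.Reachable.refl v)]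
  have hgr_adj : ∀ {v w : V}, G.Adj v w → gr v = gr w := by
    intro v w h
    exact hgr_unique v (gr w) (h.reachable.trans (hgr w))
  -- the chosen path to the root
  let πP : ∀ v : V, G.Path v (gr v).val := fun v => (hgr v).some.toPath
  -- the parent function
  let p : V → V := fun v => if v ∈ R then v else (πP v).val.getVert 1
  have hproots : ∀ v ∈ R, p v = v := fun v hv => if_pos hv
  have hstep : ∀ v ∉ R, G.Adj v (p v) ∧ (πP (p v)).val.length + 1 = (πP v).val.length := by
    intro v hv
    have hvne : v ≠ (gr v).val := fun hc => hv (hc ▸ (gr v).2)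
    obtain ⟨w, ha, q, hq⟩ := Walk.exists_eq_cons_of_ne hvne (πP v).val
    have hpv : p v = w := by
      show (if v ∈ R then v else (πP v).val.getVert 1) = w
      rw [if_neg hv, hq, Walk.getVert_cons_succ, Walk.getVert_zero]
    have hgrw : gr v = gr w := hgr_adj ha
    have hqpath : q.IsPath := by
      have := (πP v).2
      rw [hq] at this
      exact this.of_cons
    have hcast : (gr v).val = (gr w).val := by rw [hgrw]
    have hq' : (q.copy rfl hcast).IsPath := (Walk.isPath_copy q rfl hcast).mpr hqpath
    have hunique : πP w = ⟨q.copy rfl hcast, hq'⟩ := hPU _ _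
    constructor
    · rw [hpv]; exact ha
    · rw [hpv, hunique]
      simp only [Walk.length_copy]
      rw [hq, Walk.length_cons]
  -- p is a parent function
  have hpf : IsPF R p := by
    refine ⟨hproots, ?_⟩
    intro v
    obtain ⟨m, hm⟩ : ∃ m, (πP v).val.length ≤ m := ⟨_, le_refl _⟩
    induction m generalizing v with
    | zero =>
      refine ⟨0, ?_⟩
      by_contra hv
      have := (hstep v hv).2
      omega
    | succ m ih =>
      by_cases hv : v ∈ R
      · exact ⟨0, hv⟩
      · obtain ⟨k, hk⟩ := ih (p v) (by have := (hstep v hv).2; omega)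
        exact ⟨k + 1, by rwa [Function.iterate_succ_apply]⟩
  refine ⟨p, hpf, ?_⟩
  -- graphOf R p = G
  have hcase : ∀ v w : V, G.Adj v w → v ∉ R → p v ≠ w → p w = v := by
    intro v w hadj hv hne
    have hgrvw : gr v = gr w := hgr_adj hadj
    -- w is not on the chosen path from v
    have hwsup : w ∉ (πP v).val.support := by
      intro hwsup
      have hT : ((πP v).val.takeUntil w hwsup).IsPath := (πP v).2.takeUntil hwsup
      have hE : (Walk.cons hadj Walk.nil).IsPath := by simp [hadj.ne]
      have hTE : (⟨(πP v).val.takeUntil w hwsup, hT⟩ : G.Path v w) = ⟨Walk.cons hadj Walk.nil, hE⟩ :=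
        hPU _ _
      have hspec := (πP v).val.take_spec hwsup
      rw [show (πP v).val.takeUntil w hwsup = Walk.cons hadj Walk.nil from congrArg Subtype.val hTE]
        at hspec
      rw [Walk.cons_append, Walk.nil_append] at hspec
      apply hne
      show (if v ∈ R then v else (πP v).val.getVert 1) = w
      rw [if_neg hv, ← hspec, Walk.getVert_cons_succ, Walk.getVert_zero]
    by_cases hw : w ∈ R
    · -- then (gr v).val = w and the path from v is the single edge... show p w = v directly
      -- w is a root: p w = w by hproots; but we must show p w = v; contradiction unless...
      exfalso
      apply hne
      have hgrv : (gr v).val = w := by rw [hgrvw, hgr_self w hw]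
      have hE : (Walk.cons hadj Walk.nil).IsPath := by simp [hadj.ne]
      have hunique : πP v = ⟨(Walk.cons hadj Walk.nil).copy rfl hgrv.symm,
          (Walk.isPath_copy _ rfl hgrv.symm).mpr hE⟩ := hPU _ _
      show (if v ∈ R then v else (πP v).val.getVert 1) = w
      rw [if_neg hv, hunique]
      simp only [Walk.getVert_copy, Walk.getVert_cons_succ, Walk.getVert_zero]
    · -- w ∉ R : build the path w → root via v
      have hgrv : (gr w).val = (gr v).val := by rw [hgrvw]
      have hW : (Walk.cons hadj.symm (πP v).val).IsPath := by
        rw [Walk.cons_isPath_iff]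
        exact ⟨(πP v).2, hwsup⟩
      have hW' : ((Walk.cons hadj.symm (πP v).val).copy rfl hgrv.symm).IsPath :=
        (Walk.isPath_copy _ rfl hgrv.symm).mpr hW
      have hunique : πP w = ⟨(Walk.cons hadj.symm (πP v).val).copy rfl hgrv.symm, hW'⟩ := hPU _ _
      show (if w ∈ R then w else (πP w).val.getVert 1) = v
      rw [if_neg hw, hunique]
      simp only [Walk.getVert_copy, Walk.getVert_cons_succ, Walk.getVert_zero]
  ext v w
  constructor
  · intro h
    rcases graphOf_adj.mp h with ⟨hne, ⟨hvR, hpv⟩ | ⟨hwR, hpw⟩⟩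
    · exact hpv ▸ (hstep v hvR).1
    · exact (hpw ▸ (hstep w hwR).1).symm
  · intro hadj
    refine graphOf_adj.mpr ⟨hadj.ne, ?_⟩
    by_cases hv : v ∈ R
    · by_cases hw : w ∈ R
      · exfalso
        have hvw := hgr_adj hadj
        have h1 := hgr_self v hv
        have h2 := hgr_self w hw
        rw [hvw] at h1
        exact hadj.ne (h1.symm.trans h2)
      · right
        refine ⟨hw, ?_⟩
        by_contra hc
        have h3 := hcase w v hadj.symm hw hc
        rw [hproots v hv] at h3
        exact hadj.ne h3
    · by_cases hpvw : p v = w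
      · exact Or.inl ⟨hv, hpvw⟩
      · have hpw := hcase v w hadj hv hpvw
        have hw : w ∉ R := by
          intro hw
          rw [hproots w hw] at hpw
          exact hadj.ne hpw.symm
        exact Or.inr ⟨hw, hpw⟩

/-- Forests on vertex set `{1, …, n}` consisting of exactly `t` trees such that
the roots `1, …, t` lie in pairwise different trees. -/
def ForestSet (n t : ℕ) : Set (SimpleGraph (Fin n)) :=
  {G | G.IsAcyclic ∧ Nat.card G.ConnectedComponent = t ∧
    ∀ v w : Fin n, v.val < t → w.val < t → v ≠ w → ¬ G.Reachable v w}

/-- The number of forests on `{1, …, n}` with exactly `t` trees whose roots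
`1, …, t` lie in pairwise different trees equals `t·n^{n−t−1}`. -/
theorem card_forests (n t : ℕ) (h1 : 1 ≤ t) (h2 : t < n) :
    (ForestSet n t).ncard = t * n ^ (n - t - 1) := by
  classical
  set R : Finset (Fin n) := Finset.univ.filter (fun v : Fin n => v.val < t) with hR
  have hmemR : ∀ v : Fin n, v ∈ R ↔ v.val < t := by intro v; simp [hR]
  have hcardR : R.card = t := by
    have he : {v : Fin n // v.val < t} ≃ Fin t :=
      ⟨fun x => ⟨x.val.val, x.2⟩, fun i => ⟨⟨i.val, lt_trans i.2 h2⟩, i.2⟩,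
        fun x => rfl, fun i => rfl⟩
    rw [hR, ← Fintype.card_subtype, Fintype.card_congr he, Fintype.card_fin]
  -- the bijection with parent functions
  have hfwd : ∀ p : {p : Fin n → Fin n // IsPF R p}, graphOf R p.val ∈ ForestSet n t := by
    rintro ⟨p, hp⟩
    refine ⟨hp.acyclic, ?_, ?_⟩
    · rw [hp.card_comp, hcardR]
    · intro v w hv hw hne
      exact hp.roots_sep ((hmemR v).mpr hv) ((hmemR w).mpr hw) hne
  have hbij : Function.Bijective (fun p : {p : Fin n → Fin n // IsPF R p} =>
      (⟨graphOf R p.val, hfwd p⟩ : ForestSet n t)) := by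
    constructor
    · rintro ⟨p, hp⟩ ⟨p', hp'⟩ h
      have : graphOf R p = graphOf R p' := congrArg Subtype.val h
      exact Subtype.ext (graphOf_injective hp hp' this)
    · rintro ⟨G, hGac, hGcomp, hGsep⟩
      obtain ⟨p, hp, hpG⟩ := graphOf_surjective hGac (by rw [hGcomp, hcardR])
        (fun v w hv hw hne => hGsep v w ((hmemR v).mp hv) ((hmemR w).mp hw) hne)
      exact ⟨⟨p, hp⟩, Subtype.ext hpG⟩
  have hcount := card_isPF n (Fin n) R (Fintype.card_fin n)
  rw [← Nat.card_coe_set_eq, ← Nat.card_eq_of_bijective _ hbij, hcount, hcardR,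
    forestCount, if_neg (by omega : t ≠ n)]
end

section
/- Let m = m(n) = O(n). Consider the random multigraph M on vertex set {1,…,n} obtained from a uniformly random location vector (b₁,…,b_{2m}) ∈ {1,…,n}^{2m} by taking the m edges {b_{2i−1}, b_{2i}} for i = 1,…,m. Then lim inf over n of the probability that M is a simple graph is strictly positive. Moreover, conditioned on M being simple, M is uniformly distributed over all simple graphs on {1,…,n} with m edges. -/
open Function

lemma sym2_inf_lt_sup {α : Type*} [LinearOrder α] {e : Sym2 α} (he : ¬ e.IsDiag) :
    e.inf < e.sup := by
  induction e using Sym2.ind with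
  | _ a b =>
    simp only [Sym2.mk_isDiag_iff] at he
    simpa using inf_lt_sup.2 he

lemma sym2_mk_inf_sup {α : Type*} [LinearOrder α] (e : Sym2 α) :
    s(e.inf, e.sup) = e := Sym2.sortEquiv.left_inv e

/-- pairs with distinct coordinates ≃ nondiagonal `Sym2` elements × orientation -/
def pairEquiv {n : ℕ} :
    {p : Fin n × Fin n // p.1 ≠ p.2} ≃ {e : Sym2 (Fin n) // ¬ e.IsDiag} × Bool where
  toFun p := (⟨s(p.1.1, p.1.2), by simpa using p.2⟩, decide (p.1.1 < p.1.2))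
  invFun x := ⟨if x.2 then (x.1.1.inf, x.1.1.sup) else (x.1.1.sup, x.1.1.inf),
    by
    rcases x with ⟨⟨e, he⟩, b⟩
    have h := sym2_inf_lt_sup he
    cases b <;> simp [h.ne, h.ne']⟩
  left_inv := by
    rintro ⟨⟨a, b⟩, hab⟩
    rcases lt_or_gt_of_ne hab with h | h
    · simp [Subtype.ext_iff, h, inf_eq_left.2 h.le, sup_eq_right.2 h.le]
    · simp [Subtype.ext_iff, h.asymm, not_lt.2 h.le, inf_eq_right.2 h.le, sup_eq_left.2 h.le]
  right_inv := by
    rintro ⟨⟨e, he⟩, b⟩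
    have h := sym2_inf_lt_sup he
    cases b <;>
      simp [Subtype.ext_iff, Prod.ext_iff, sym2_mk_inf_sup, h, lt_asymm h, h.le, Sym2.eq_swap]

def simpleEquiv {n M : ℕ} :
    {ω : Fin M → Fin n × Fin n // (∀ i, (ω i).1 ≠ (ω i).2) ∧
      Injective fun i => s((ω i).1, (ω i).2)} ≃
    (Fin M ↪ {e : Sym2 (Fin n) // ¬ e.IsDiag}) × (Fin M → Bool) where
  toFun ω := (⟨fun i => (pairEquiv ⟨ω.1 i, ω.2.1 i⟩).1,
      fun i j hij => ω.2.2 (congrArg Subtype.val hij)⟩,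
    fun i => (pairEquiv ⟨ω.1 i, ω.2.1 i⟩).2)
  invFun fb := ⟨fun i => (pairEquiv.symm (fb.1 i, fb.2 i)).1,
    ⟨fun i => (pairEquiv.symm (fb.1 i, fb.2 i)).2,
     fun i j hij => by
       have h1 : ∀ k, s(((pairEquiv.symm (fb.1 k, fb.2 k)).1).1,
           ((pairEquiv.symm (fb.1 k, fb.2 k)).1).2) = (fb.1 k).1 :=
         fun k => congrArg (fun y => y.1.val) (pairEquiv.apply_symm_apply (fb.1 k, fb.2 k))
       exact fb.1.injective (Subtype.ext ((h1 i).symm.trans ((show _ = _ from hij).trans (h1 j))))⟩⟩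
  left_inv := fun ω => Subtype.ext <| funext fun i =>
    congrArg Subtype.val (pairEquiv.symm_apply_apply ⟨ω.1 i, ω.2.1 i⟩)
  right_inv := fun fb => by
    refine Prod.ext (DFunLike.ext _ _ fun i => Subtype.ext ?_) (funext fun i => ?_)
    · exact congrArg (fun y => y.1.val) (pairEquiv.apply_symm_apply (fb.1 i, fb.2 i))
    · exact congrArg Prod.snd (pairEquiv.apply_symm_apply (fb.1 i, fb.2 i))

noncomputable def graphEquiv {n M : ℕ} (H : SimpleGraph (Fin n)) :
    {ω : Fin M → Fin n × Fin n // ((∀ i, (ω i).1 ≠ (ω i).2) ∧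
        Injective fun i => s((ω i).1, (ω i).2)) ∧
        Set.range (fun i => s((ω i).1, (ω i).2)) = H.edgeSet} ≃
    (Fin M ≃ H.edgeSet) × (Fin M → Bool) where
  toFun ω := (Equiv.ofBijective
      (fun i => (⟨s((ω.1 i).1, (ω.1 i).2), by
        have := Set.mem_range_self (f := fun i => s((ω.1 i).1, (ω.1 i).2)) i
        rwa [ω.2.2] at this⟩ : H.edgeSet))
      ⟨fun i j hij => ω.2.1.2 (congrArg Subtype.val hij),
       fun e => by
        obtain ⟨i, hi⟩ : e.val ∈ Set.range (fun i => s((ω.1 i).1, (ω.1 i).2)) :=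
          ω.2.2.symm ▸ e.2
        exact ⟨i, Subtype.ext hi⟩⟩,
    fun i => (pairEquiv ⟨ω.1 i, ω.2.1.1 i⟩).2)
  invFun σb := ⟨fun i => (pairEquiv.symm
      (⟨(σb.1 i).val, H.not_isDiag_of_mem_edgeSet (σb.1 i).2⟩, σb.2 i)).1, by
    set g := fun i => (pairEquiv.symm
      (⟨(σb.1 i).val, H.not_isDiag_of_mem_edgeSet (σb.1 i).2⟩, σb.2 i))
    have h1 : ∀ k, s((g k).1.1, (g k).1.2) = (σb.1 k).val := fun k =>
      congrArg (fun y => y.1.val) (pairEquiv.apply_symm_apply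
        (⟨(σb.1 k).val, H.not_isDiag_of_mem_edgeSet (σb.1 k).2⟩, σb.2 k))
    refine ⟨⟨fun i => (g i).2, fun i j hij => σb.1.injective (Subtype.ext
      (((h1 i).symm.trans ((show _ = _ from hij).trans (h1 j)))))⟩, ?_⟩
    · ext e
      simp only [Set.mem_range, h1]
      constructor
      · rintro ⟨i, rfl⟩; exact (congrArg (· ∈ H.edgeSet) (h1 i)).mpr (σb.1 i).2
      · intro he; exact ⟨σb.1.symm ⟨e, he⟩, (h1 _).trans (by simp)⟩⟩
  left_inv := fun ω => Subtype.ext <| funext fun i =>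
    congrArg Subtype.val (pairEquiv.symm_apply_apply ⟨ω.1 i, ω.2.1.1 i⟩)
  right_inv := fun σb => by
    refine Prod.ext (Equiv.ext fun i => Subtype.ext ?_) (funext fun i => ?_)
    · exact congrArg (fun y => y.1.val) (pairEquiv.apply_symm_apply
        (⟨(σb.1 i).val, H.not_isDiag_of_mem_edgeSet (σb.1 i).2⟩, σb.2 i))
    · exact congrArg Prod.snd (pairEquiv.apply_symm_apply
        (⟨(σb.1 i).val, H.not_isDiag_of_mem_edgeSet (σb.1 i).2⟩, σb.2 i))

lemma count_simple (n M : ℕ) :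
    ({ω : Fin M → Fin n × Fin n | (∀ i, (ω i).1 ≠ (ω i).2) ∧
      Function.Injective fun i => s((ω i).1, (ω i).2)}.ncard) =
    2 ^ M * (n.choose 2).descFactorial M := by
  rw [← Nat.card_coe_set_eq]
  refine (Nat.card_congr simpleEquiv).trans ?_
  rw [Nat.card_prod, Nat.card_eq_fintype_card, Nat.card_eq_fintype_card,
    Fintype.card_embedding_eq, Sym2.card_subtype_not_diag]
  simp [Fintype.card_fun, mul_comm]

lemma count_graph {n M : ℕ} (H : SimpleGraph (Fin n)) (hH : Nat.card H.edgeSet = M) :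
    ({ω : Fin M → Fin n × Fin n | ((∀ i, (ω i).1 ≠ (ω i).2) ∧
        Function.Injective fun i => s((ω i).1, (ω i).2)) ∧
        Set.range (fun i => s((ω i).1, (ω i).2)) = H.edgeSet}.ncard) =
    2 ^ M * M.factorial := by
  rw [← Nat.card_coe_set_eq]
  refine (Nat.card_congr (graphEquiv H)).trans ?_
  rw [Nat.card_prod]
  haveI : Finite H.edgeSet := Subtype.finite
  haveI := Fintype.ofFinite H.edgeSet
  have e : H.edgeSet ≃ Fin M :=
    Fintype.equivFinOfCardEq (by rw [← Nat.card_eq_fintype_card, hH])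
  rw [Nat.card_congr ((Equiv.refl (Fin M)).equivCongr e)]
  rw [Nat.card_eq_fintype_card, Nat.card_eq_fintype_card,
    Fintype.card_equiv (Equiv.refl (Fin M))]
  simp [Fintype.card_fun, mul_comm]

lemma exp_le_one_sub {a : ℝ} (h0 : 0 ≤ a) (h2 : a ≤ 1/2) : Real.exp (-2*a) ≤ 1 - a := by
  have h := Real.add_one_le_exp (2*a)
  have hmul : Real.exp (-2*a) * Real.exp (2*a) = 1 := by
    rw [← Real.exp_add]; norm_num
  nlinarith [Real.exp_pos (2*a), Real.exp_pos (-2*a)]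

lemma ratio_bound (C : ℝ) (hC : 1 ≤ C) {n M : ℕ} (hM : (M:ℝ) ≤ C * n)
    (hn : 2*(2*C+1) ≤ (n:ℝ)) :
    Real.exp (-(2*C*(2*C+1))) ≤ ((2^M * (n.choose 2).descFactorial M : ℕ) : ℝ) / (n:ℝ)^(2*M) := by
  have hn0 : (0:ℝ) < n := by nlinarith
  set N := n.choose 2 with hN
  have hNcast : (N:ℝ) = n*(n-1)/2 := Nat.cast_choose_two (K := ℝ) n
  have hiN : ∀ i ∈ Finset.range M, (i:ℝ) < (N:ℝ) := by
    intro i hi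
    have h1 : (i:ℝ) < M := by exact_mod_cast Finset.mem_range.1 hi
    have h2 : (i:ℝ) < C * n := lt_of_lt_of_le h1 hM
    rw [hNcast]; nlinarith
  have key : ((2^M * N.descFactorial M : ℕ) : ℝ) = ∏ i ∈ Finset.range M, (2 * ((N:ℝ) - i)) := by
    rw [Nat.descFactorial_eq_prod_range, Nat.cast_mul, Nat.cast_pow, Nat.cast_prod,
      Finset.prod_mul_distrib, Finset.prod_const, Finset.card_range]
    push_cast
    congr 1
    refine Finset.prod_congr rfl fun i hi => ?_
    have : (i:ℕ) ≤ N := by exact_mod_cast (hiN i hi).le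
    rw [Nat.cast_sub this]
  have hsplit : (∏ i ∈ Finset.range M, (2 * ((N:ℝ) - i))) / (n:ℝ)^(2*M) =
      ∏ i ∈ Finset.range M, (2 * ((N:ℝ) - i) / (n:ℝ)^2) := by
    rw [Finset.prod_div_distrib, Finset.prod_const, Finset.card_range, ← pow_mul]
  rw [key, hsplit]
  set a := (2*C+1)/(n:ℝ) with ha
  have han : a * n = 2*C+1 := div_mul_cancel₀ _ hn0.ne'
  have ha0 : 0 ≤ a := by positivity
  have ha2 : a ≤ 1/2 := by rw [ha, div_le_iff₀ hn0]; nlinarith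
  have hfac : ∀ i ∈ Finset.range M, Real.exp (-2*a) ≤ 2 * ((N:ℝ) - i) / (n:ℝ)^2 := by
    intro i hi
    refine (exp_le_one_sub ha0 ha2).trans ?_
    have h1 : (i:ℝ) < M := by exact_mod_cast Finset.mem_range.1 hi
    have h2 : (i:ℝ) < C * n := lt_of_lt_of_le h1 hM
    rw [hNcast, le_div_iff₀ (by positivity)]
    nlinarith
  have h1 : Real.exp (-(2*C*(2*C+1))) ≤ ∏ _i ∈ Finset.range M, Real.exp (-2*a) := by
    rw [Finset.prod_const, Finset.card_range, ← Real.exp_nat_mul]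
    refine Real.exp_le_exp.2 ?_
    have hMn : a * M ≤ C * (2*C+1) := by
      have := mul_le_mul_of_nonneg_left hM ha0
      nlinarith
    nlinarith
  refine h1.trans (Finset.prod_le_prod (fun i _ => (Real.exp_pos _).le) hfac)

/-- The random multigraph on `[n]` with `m` edges given by a uniformly random
location vector (here: `m` independent uniform ordered pairs of vertices).
With `m = O(n)`: the probability of being simple (no loops, no repeated edges)
has strictly positive lim inf; and conditioned on being simple the multigraph
is uniform over simple graphs with `m` edges, i.e. every simple graph `H` on
`[n]` with `m` edges arises from exactly `2^m·m!` location vectors (so that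
`P(M = H) = 2^m·m!/n^{2m}`). -/
theorem random_multigraph_simple (m : ℕ → ℕ)
    (hm : ∃ C : ℝ, ∀ n : ℕ, (m n : ℝ) ≤ C * (n : ℝ)) :
    (∃ δ : ℝ, 0 < δ ∧ ∀ᶠ n : ℕ in Filter.atTop,
      δ ≤ ({ω : Fin (m n) → Fin n × Fin n |
              (∀ i, (ω i).1 ≠ (ω i).2) ∧
              Function.Injective fun i => s((ω i).1, (ω i).2)}.ncard : ℝ) /
            (n : ℝ) ^ (2 * m n)) ∧
    ∀ n : ℕ, ∀ H : SimpleGraph (Fin n), Nat.card H.edgeSet = m n →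
      {ω : Fin (m n) → Fin n × Fin n |
          ((∀ i, (ω i).1 ≠ (ω i).2) ∧
            Function.Injective fun i => s((ω i).1, (ω i).2)) ∧
          Set.range (fun i => s((ω i).1, (ω i).2)) = H.edgeSet}.ncard =
        2 ^ (m n) * (m n).factorial := by
  obtain ⟨C₀, hC₀⟩ := hm
  set C := max C₀ 1 with hCdef
  have hC1 : (1:ℝ) ≤ C := le_max_right _ _
  have hmC : ∀ n : ℕ, (m n : ℝ) ≤ C * n := fun n =>
    (hC₀ n).trans (mul_le_mul_of_nonneg_right (le_max_left _ _) (Nat.cast_nonneg n))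
  constructor
  · refine ⟨Real.exp (-(2*C*(2*C+1))), Real.exp_pos _, ?_⟩
    have hev : ∀ᶠ n : ℕ in Filter.atTop, 2*(2*C+1) ≤ (n:ℝ) :=
      Filter.Tendsto.eventually_ge_atTop tendsto_natCast_atTop_atTop _
    filter_upwards [hev] with n hn
    rw [count_simple]
    exact ratio_bound C hC1 (hmC n) hn
  · intro n H hH
    exact count_graph H hH
end
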